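/- Fix h₂ > h₁ > 0 with h₂ ≠ h₁, and P₁ > 0. Define f(P₂) = ρ(P₁,P₂)/φ₂(P₂) with ρ(P₁,P₂) = (1+h₁P₁+h₂P₂)/(1+P₁+P₂) and φ₂(P) = (1+h₂P)/(1+P). Then the derivative of f with respect to P₂ has the same sign as ψ(P₂) = P₁·h₂·(h₂−h₁)·(P₂−p)(P₂−p̄), where p = (−h₂(1−h₁) + √D)/(h₂(h₂−h₁)), p̄ = (−h₂(1−h₁) − √D)/(h₂(h₂−h₁)), and D = h₁h₂(h₂−1)[(h₂−1)+(h₂−h₁)P₁], provided D ≥ 0. -/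

import Mathlib

lemma sign_div_pos (a c : ℝ) (hc : 0 < c) : Real.sign (a / c) = Real.sign a := by
  rcases lt_trichotomy a 0 with h | h | h
  · rw [Real.sign_of_neg h, Real.sign_of_neg (div_neg_of_neg_of_pos h hc)]
  · simp [h]
  · rw [Real.sign_of_pos h, Real.sign_of_pos (div_pos h hc)]

/-- the derivative of `f(P₂) = ρ(P₁,P₂)/φ₂(P₂)` with respect to `P₂` has
the same sign as `ψ(P₂) = P₁h₂(h₂−h₁)(P₂−p)(P₂−p̄)`, where `p, p̄` are as displayed and
`D = h₁h₂(h₂−1)[(h₂−1)+(h₂−h₁)P₁] ≥ 0`; in fact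
`f'(P₂) = ψ(P₂)/((1+P₁+P₂)²(1+h₂P₂)²)`. -/
theorem stmt_13 (h₁ h₂ P₁ P₂ : ℝ) (hh₁ : 0 < h₁) (hlt : h₁ < h₂) (hP₁ : 0 < P₁)
    (hP₂ : 0 ≤ P₂)
    (D : ℝ) (hD : D = h₁ * h₂ * (h₂ - 1) * ((h₂ - 1) + (h₂ - h₁) * P₁)) (hDpos : 0 ≤ D)
    (p pbar : ℝ)
    (hp : p = (-(h₂ * (1 - h₁)) + Real.sqrt D) / (h₂ * (h₂ - h₁)))
    (hpbar : pbar = (-(h₂ * (1 - h₁)) - Real.sqrt D) / (h₂ * (h₂ - h₁))) :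
    HasDerivAt
      (fun x : ℝ => ((1 + h₁ * P₁ + h₂ * x) / (1 + P₁ + x)) / ((1 + h₂ * x) / (1 + x)))
      (P₁ * h₂ * (h₂ - h₁) * (P₂ - p) * (P₂ - pbar)
        / ((1 + P₁ + P₂) ^ 2 * (1 + h₂ * P₂) ^ 2)) P₂ ∧
    Real.sign
      (deriv (fun x : ℝ =>
        ((1 + h₁ * P₁ + h₂ * x) / (1 + P₁ + x)) / ((1 + h₂ * x) / (1 + x))) P₂)
      = Real.sign (P₁ * h₂ * (h₂ - h₁) * (P₂ - p) * (P₂ - pbar)) := by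
  have hh₂ : 0 < h₂ := hh₁.trans hlt
  have hd1 : (0:ℝ) < 1 + P₁ + P₂ := by linarith
  have hd2 : (0:ℝ) < 1 + P₂ := by linarith
  have hn2 : (0:ℝ) < 1 + h₂ * P₂ := by nlinarith
  have hvne : (1 + h₂ * P₂) / (1 + P₂) ≠ 0 := ne_of_gt (div_pos hn2 hd2)
  have h1 : HasDerivAt (fun x : ℝ => 1 + h₁ * P₁ + h₂ * x) h₂ P₂ := by
    simpa using ((hasDerivAt_id P₂).const_mul h₂).const_add (1 + h₁ * P₁)
  have h2 : HasDerivAt (fun x : ℝ => 1 + P₁ + x) 1 P₂ := by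
    simpa using (hasDerivAt_id P₂).const_add (1 + P₁)
  have h3 : HasDerivAt (fun x : ℝ => 1 + h₂ * x) h₂ P₂ := by
    simpa using ((hasDerivAt_id P₂).const_mul h₂).const_add (1:ℝ)
  have h4 : HasDerivAt (fun x : ℝ => 1 + x) 1 P₂ := by
    simpa using (hasDerivAt_id P₂).const_add (1:ℝ)
  have hu := h1.div h2 (ne_of_gt hd1)
  have hv := h3.div h4 (ne_of_gt hd2)
  have hf := hu.div hv hvne
  have hs : Real.sqrt D ^ 2 = D := Real.sq_sqrt hDpos
  have hne : h₂ * (h₂ - h₁) ≠ 0 := ne_of_gt (mul_pos hh₂ (by linarith))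
  have hprod : (P₂ - p) * (P₂ - pbar)
      = ((h₂ * (h₂ - h₁) * P₂ + h₂ * (1 - h₁)) ^ 2 - D) / (h₂ * (h₂ - h₁)) ^ 2 := by
    rw [hp, hpbar]
    field_simp [sub_ne_zero.mpr (ne_of_gt hlt)]
    linear_combination (-1) * hs
  have key : ((h₂ * (1 + P₁ + P₂) - (1 + h₁ * P₁ + h₂ * P₂) * 1) / (1 + P₁ + P₂) ^ 2 *
        ((1 + h₂ * P₂) / (1 + P₂)) -
      (1 + h₁ * P₁ + h₂ * P₂) / (1 + P₁ + P₂) *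
        ((h₂ * (1 + P₂) - (1 + h₂ * P₂) * 1) / (1 + P₂) ^ 2)) /
      ((1 + h₂ * P₂) / (1 + P₂)) ^ 2
      = P₁ * h₂ * (h₂ - h₁) * (P₂ - p) * (P₂ - pbar)
        / ((1 + P₁ + P₂) ^ 2 * (1 + h₂ * P₂) ^ 2) := by
    rw [mul_assoc, hprod, hD]
    field_simp [sub_ne_zero.mpr (ne_of_gt hlt)]
    ring
  simp only [Pi.div_def] at hf
  rw [key] at hf
  refine ⟨hf, ?_⟩
  rw [hf.deriv]
  exact sign_div_pos _ _ (by positivity)
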